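/- arXiv:1605.01889 — 3 statements merged into one kernel-verified Lean document; each statement's English description precedes it below -/
import Mathlib

section
/- Corollary 2, normal baseline: Consider the linear regression model y_j = x_jᵀβ + ε_j, j = 1,…,n, with ε_j i.i.d. two-piece distributed with location 0, scale σ, baseline density the standard normal φ(z) = (2π)^{−1/2} exp(−z²/2), and parameterisation functions a(γ), b(γ), under the prior π(β,σ,γ) ∝ σ^{−q} π(γ) with q ≥ 0. If y does not lie in the column space of X, n > p + 1 − q, and condition (iii) holds (∫_Γ max(a(γ),b(γ))^{n+q−1}/(a(γ)+b(γ))^n π(γ) dγ < ∞), then the posterior is proper: ∫_Γ ∫_0^∞ ∫_{ℝ^p} ∏_{j=1}^n g(y_j − x_jᵀβ | σ, a(γ), b(γ); φ) · σ^{−q} π(γ) dβ dσ dγ < ∞. -/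
set_option maxHeartbeats 1000000

open MeasureTheory

open Real Set in
private lemma quad_decomp (n p : ℕ) (X : Matrix (Fin n) (Fin p) ℝ) (hX : X.rank = p)
    (y : Fin n → ℝ)
    (hy : ¬ ∃ β : Fin p → ℝ, ∀ j, y j = ∑ i, X j i * β i) :
    ∃ (t : Fin p → ℝ) (d lam : ℝ), 0 < d ∧ 0 < lam ∧ ∀ β : Fin p → ℝ,
      d ^ 2 + lam * ∑ i, (β i - t i) ^ 2 ≤ ∑ j, (y j - ∑ i, X j i * β i) ^ 2 := by
  classical
  have hinj : Function.Injective X.mulVecLin := by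
    rw [← LinearMap.ker_eq_bot]
    have h1 := LinearMap.finrank_range_add_finrank_ker X.mulVecLin
    have h2 : Module.finrank ℝ (Fin p → ℝ) = p := by simp
    have h3 : Module.finrank ℝ (LinearMap.range X.mulVecLin) = p := hX
    rw [h2, h3] at h1
    have h4 : Module.finrank ℝ (LinearMap.ker X.mulVecLin) = 0 := by omega
    exact Submodule.finrank_eq_zero.mp h4
  set F := EuclideanSpace ℝ (Fin p)
  set E := EuclideanSpace ℝ (Fin n)
  set L : F →ₗ[ℝ] E :=
    ((WithLp.linearEquiv 2 ℝ (Fin n → ℝ)).symm.toLinearMap.comp X.mulVecLin).comp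
      (WithLp.linearEquiv 2 ℝ (Fin p → ℝ)).toLinearMap with hL
  have hLapp : ∀ (v : F) (j : Fin n), L v j = ∑ i, X j i * v i := by
    intro v j
    simp [hL, Matrix.mulVecLin, Matrix.mulVec, dotProduct]
    rfl
  have hLinj : Function.Injective L := by
    intro u v huv
    have := hinj (a₁ := (WithLp.equiv 2 (Fin p → ℝ)) u) (a₂ := (WithLp.equiv 2 (Fin p → ℝ)) v)
    simp [hL] at huv
    exact (WithLp.equiv 2 (Fin p → ℝ)).injective
      (this ((WithLp.linearEquiv 2 ℝ (Fin n → ℝ)).symm.injective huv))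
  obtain ⟨K, hK0, hKanti⟩ := L.exists_antilipschitzWith (LinearMap.ker_eq_bot.mpr hLinj)
  set V := LinearMap.range L
  set yE : E := (WithLp.equiv 2 (Fin n → ℝ)).symm y with hyE
  set pr : E := (V.orthogonalProjection yE : E) with hpr
  have hprV : pr ∈ V := (V.orthogonalProjection yE).2
  obtain ⟨t, ht⟩ := hprV
  set r : E := yE - pr with hr
  have hrmem : r ∈ Vᗮ := V.sub_starProjection_mem_orthogonal yE
  have hrne : r ≠ 0 := by
    intro h0
    apply hy
    refine ⟨t, fun j => ?_⟩
    have h5 : yE = pr := by rwa [hr, sub_eq_zero] at h0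
    have h6 : yE j = L t j := by rw [h5, ht]
    rw [hLapp] at h6
    exact h6
  refine ⟨t, ‖r‖, ((K : ℝ)⁻¹) ^ 2, norm_pos_iff.mpr hrne, by positivity, ?_⟩
  intro β
  set βE : F := (WithLp.equiv 2 (Fin p → ℝ)).symm β with hβE
  have key : ‖r‖ ^ 2 + ((K : ℝ)⁻¹) ^ 2 * ‖βE - t‖ ^ 2 ≤ ‖yE - L βE‖ ^ 2 := by
    have hdecomp : yE - L βE = r + L (t - βE) := by
      rw [hr, map_sub, ht]; abel
    have hperp : inner ℝ r (L (t - βE)) = (0 : ℝ) := by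
      rw [real_inner_comm]
      exact hrmem (L (t - βE)) (LinearMap.mem_range_self L _)
    have hnorm : ‖yE - L βE‖ ^ 2 = ‖r‖ ^ 2 + ‖L (t - βE)‖ ^ 2 := by
      rw [hdecomp, norm_add_sq_real, hperp]; ring
    have hanti : ‖t - βE‖ ≤ K * ‖L (t - βE)‖ := by
      simpa [dist_eq_norm] using hKanti.le_mul_dist (t - βE) 0
    have h2 : ((K : ℝ)⁻¹) ^ 2 * ‖βE - t‖ ^ 2 ≤ ‖L (t - βE)‖ ^ 2 := by
      have hK' : (0:ℝ) < K := hK0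
      have h3 : ((K:ℝ)⁻¹) * ‖βE - t‖ ≤ ‖L (t - βE)‖ := by
        rw [norm_sub_rev]
        rw [inv_mul_le_iff₀ hK']
        exact hanti
      have h4 : (0:ℝ) ≤ ((K:ℝ)⁻¹) * ‖βE - t‖ := by positivity
      calc ((K : ℝ)⁻¹) ^ 2 * ‖βE - t‖ ^ 2 = (((K:ℝ)⁻¹) * ‖βE - t‖)^2 := by ring
        _ ≤ ‖L (t - βE)‖ ^ 2 := by
            apply pow_le_pow_left₀ h4 h3
    rw [hnorm]
    linarith
  have hcomp : ∀ j, (yE - L βE) j = y j - ∑ i, X j i * β i := by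
    intro j
    have h : (yE - L βE) j = yE j - L βE j := rfl
    rw [h, hLapp]
    rfl
  have e1 : ‖yE - L βE‖ ^ 2 = ∑ j, (y j - ∑ i, X j i * β i) ^ 2 := by
    rw [EuclideanSpace.norm_eq, Real.sq_sqrt (by positivity)]
    refine Finset.sum_congr rfl fun j _ => ?_
    rw [hcomp j, Real.norm_eq_abs, sq_abs]
  have e2 : ‖βE - t‖ ^ 2 = ∑ i, (β i - t i) ^ 2 := by
    rw [EuclideanSpace.norm_eq, Real.sq_sqrt (by positivity)]
    refine Finset.sum_congr rfl fun i _ => ?_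
    have h : (βE - t) i = β i - t i := rfl
    rw [h, Real.norm_eq_abs, sq_abs]
  rw [← e1, ← e2]
  exact key

open Real Set in
private lemma gauss1D (c t : ℝ) (hc : 0 < c) :
    ∫⁻ x : ℝ, ENNReal.ofReal (Real.exp (-(c * (x - t) ^ 2))) =
      ENNReal.ofReal (Real.sqrt (π / c)) := by
  have h1 : ∫⁻ x : ℝ, ENNReal.ofReal (Real.exp (-(c * (x - t) ^ 2))) =
      ∫⁻ x : ℝ, ENNReal.ofReal (Real.exp (-(c * x ^ 2))) := by
    have := lintegral_add_right_eq_self (μ := (volume : Measure ℝ))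
      (fun x : ℝ => ENNReal.ofReal (Real.exp (-(c * x ^ 2)))) (-t)
    simpa [sub_eq_add_neg] using this
  rw [h1, ← ofReal_integral_eq_lintegral_ofReal]
  · congr 1
    simpa [neg_mul] using integral_gaussian c
  · simpa [neg_mul] using integrable_exp_neg_mul_sq hc
  · exact Filter.Eventually.of_forall fun x => (Real.exp_pos _).le

open Real Set in
private lemma gaussPi (p : ℕ) (c : ℝ) (hc : 0 < c) (t : Fin p → ℝ) :
    ∫⁻ β : Fin p → ℝ, ENNReal.ofReal (∏ i, Real.exp (-(c * (β i - t i) ^ 2))) =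
      ENNReal.ofReal (Real.sqrt (π / c)) ^ p := by
  have hint : ∀ i : Fin p, Integrable (fun x : ℝ => Real.exp (-(c * (x - t i) ^ 2))) := by
    intro i
    have := (integrable_exp_neg_mul_sq hc).comp_sub_right (t i)
    simpa [neg_mul] using this
  have hInt : Integrable (fun β : Fin p → ℝ => ∏ i, Real.exp (-(c * (β i - t i) ^ 2))) :=
    Integrable.fintype_prod (f := fun i (x : ℝ) => Real.exp (-(c * (x - t i) ^ 2))) hint
  rw [← ofReal_integral_eq_lintegral_ofReal hInt
    (Filter.Eventually.of_forall fun β => Finset.prod_nonneg fun i _ => (Real.exp_pos _).le)]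
  rw [integral_fintype_prod_volume_eq_prod (fun i (x : ℝ) => Real.exp (-(c * (x - t i) ^ 2)))]
  have hval : ∀ i : Fin p, ∫ x : ℝ, Real.exp (-(c * (x - t i) ^ 2)) = Real.sqrt (π / c) := by
    intro i
    rw [integral_sub_right_eq_self (fun x : ℝ => Real.exp (-(c * x ^ 2))) (t i)]
    simpa [neg_mul] using integral_gaussian c
  rw [Finset.prod_congr rfl fun i _ => hval i, Finset.prod_const]
  rw [ENNReal.ofReal_pow (Real.sqrt_nonneg _)]
  simp

open Real Set in
private lemma lintegral_Ioi_scale (m : ℝ) (hm : 0 < m) (g : ℝ → ENNReal) (hg : Measurable g) :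
    ∫⁻ σ in Ioi (0:ℝ), g (m * σ) = ENNReal.ofReal m⁻¹ * ∫⁻ τ in Ioi (0:ℝ), g τ := by
  have hmap : (volume : Measure ℝ).map (fun x => m * x) = ENNReal.ofReal |m⁻¹| • volume :=
    Real.map_volume_mul_left (ne_of_gt hm)
  have hpre : (fun x : ℝ => m * x) ⁻¹' Ioi 0 = Ioi 0 := by
    ext x
    simp only [mem_preimage, mem_Ioi]
    constructor
    · intro h; nlinarith
    · intro h; positivity
  calc ∫⁻ σ in Ioi (0:ℝ), g (m * σ)
      = ∫⁻ x, g x ∂((volume.restrict (Ioi 0)).map (fun x => m * x)) :=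
        (lintegral_map hg (measurable_const_mul m)).symm
    _ = ∫⁻ x, g x ∂(((volume : Measure ℝ).map (fun x => m * x)).restrict (Ioi 0)) := by
        rw [Measure.restrict_map (measurable_const_mul m) measurableSet_Ioi, hpre]
    _ = ENNReal.ofReal m⁻¹ * ∫⁻ τ in Ioi (0:ℝ), g τ := by
        rw [hmap, Measure.restrict_smul, lintegral_smul_measure, abs_of_pos (by positivity), smul_eq_mul]

open Real Set in
private lemma tail_lt_top (s c : ℝ) (hs : s < -1) (hc : 0 < c) :
    ∫⁻ τ in Ioi (0:ℝ), ENNReal.ofReal (τ ^ s * Real.exp (-(c / τ ^ 2))) < ⊤ := by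
  have hsplit : Ioc (0:ℝ) 1 ∪ Ioi 1 = Ioi 0 := Ioc_union_Ioi_eq_Ioi zero_le_one
  rw [← hsplit, lintegral_union measurableSet_Ioi Ioc_disjoint_Ioi_same]
  have h1 : ∫⁻ τ in Ioc (0:ℝ) 1, ENNReal.ofReal (τ ^ s * Real.exp (-(c / τ ^ 2))) < ⊤ := by
    set K : ℕ := ⌈-s / 2⌉₊ with hK
    have hK2 : -s ≤ 2 * K := by
      have := Nat.le_ceil (-s / 2)
      linarith
    set M : ℝ := ((K : ℝ) / c) ^ K with hM
    have hbound : ∀ τ ∈ Ioc (0:ℝ) 1,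
        ENNReal.ofReal (τ ^ s * Real.exp (-(c / τ ^ 2))) ≤ ENNReal.ofReal M := by
      intro τ hτ
      obtain ⟨hτ0, hτ1⟩ := hτ
      apply ENNReal.ofReal_le_ofReal
      have hKpos : 0 < (K : ℝ) := by
        have : (0:ℝ) < -s / 2 := by linarith
        exact_mod_cast Nat.cast_pos.mpr (Nat.ceil_pos.mpr this)
      have hx : 0 ≤ c / τ ^ 2 := by positivity
      have hexp : (c / τ ^ 2 / K) ^ K ≤ Real.exp (c / τ ^ 2) := by
        have h1 : c / τ ^ 2 / K ≤ Real.exp (c / τ ^ 2 / K) := by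
          have := Real.add_one_le_exp (c / τ ^ 2 / K)
          linarith
        have h2 : (c / τ ^ 2 / K) ^ K ≤ Real.exp (c / τ ^ 2 / K) ^ K :=
          pow_le_pow_left₀ (by positivity) h1 K
        rwa [← Real.exp_nat_mul, mul_div_cancel₀ _ (ne_of_gt hKpos)] at h2
      have hexp2 : Real.exp (-(c / τ ^ 2)) ≤ M * τ ^ (2 * K : ℕ) := by
        rw [Real.exp_neg]
        rw [inv_le_iff_one_le_mul₀ (Real.exp_pos _)]
        calc (1:ℝ) = (c / τ ^ 2 / K)^K * (M * τ ^ (2*K:ℕ)) := by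
              rw [hM]
              field_simp
              rw [← mul_pow, pow_mul, ← mul_pow]
              rw [show c / (τ ^ 2 * K) * (K / c) * τ ^ 2 = 1 by field_simp, one_pow]
            _ ≤ Real.exp (c / τ ^ 2) * (M * τ ^ (2*K:ℕ)) := by
              apply mul_le_mul_of_nonneg_right hexp
              positivity
            _ = M * τ ^ (2*K:ℕ) * Real.exp (c / τ ^ 2) := by ring
      calc τ ^ s * Real.exp (-(c / τ ^ 2)) ≤ τ ^ s * (M * τ ^ (2 * K : ℕ)) := by
            apply mul_le_mul_of_nonneg_left hexp2 (Real.rpow_nonneg hτ0.le s)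
        _ = M * (τ ^ s * τ ^ ((2 * K : ℕ) : ℝ)) := by rw [Real.rpow_natCast]; ring
        _ = M * τ ^ (s + 2 * K) := by
            rw [← Real.rpow_add hτ0]
            congr 1
            push_cast
            ring
        _ ≤ M * 1 := by
            apply mul_le_mul_of_nonneg_left _ (by positivity)
            apply Real.rpow_le_one hτ0.le hτ1
            push_cast
            linarith
        _ = M := mul_one M
    calc ∫⁻ τ in Ioc (0:ℝ) 1, ENNReal.ofReal (τ ^ s * Real.exp (-(c / τ ^ 2)))
        ≤ ∫⁻ _ in Ioc (0:ℝ) 1, ENNReal.ofReal M := by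
          apply lintegral_mono_ae
          exact (ae_restrict_iff' measurableSet_Ioc).2 (Filter.Eventually.of_forall hbound)
      _ = ENNReal.ofReal M * volume (Ioc (0:ℝ) 1) := by rw [setLIntegral_const]
      _ < ⊤ := by
          apply ENNReal.mul_lt_top ENNReal.ofReal_lt_top
          rw [Real.volume_Ioc]
          exact ENNReal.ofReal_lt_top
  have h2 : ∫⁻ τ in Ioi (1:ℝ), ENNReal.ofReal (τ ^ s * Real.exp (-(c / τ ^ 2))) < ⊤ := by
    have hbound : ∀ τ ∈ Ioi (1:ℝ),
        ENNReal.ofReal (τ ^ s * Real.exp (-(c / τ ^ 2))) ≤ ENNReal.ofReal (τ ^ s) := by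
      intro τ hτ
      apply ENNReal.ofReal_le_ofReal
      have h0 : (0:ℝ) < τ := lt_trans one_pos hτ
      calc τ ^ s * Real.exp (-(c / τ ^ 2)) ≤ τ ^ s * 1 := by
            apply mul_le_mul_of_nonneg_left _ (Real.rpow_nonneg h0.le s)
            rw [Real.exp_le_one_iff]
            have : 0 ≤ c / τ ^ 2 := by positivity
            linarith
        _ = τ ^ s := mul_one _
    calc ∫⁻ τ in Ioi (1:ℝ), ENNReal.ofReal (τ ^ s * Real.exp (-(c / τ ^ 2)))
        ≤ ∫⁻ τ in Ioi (1:ℝ), ENNReal.ofReal (τ ^ s) := by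
          apply lintegral_mono_ae
          exact (ae_restrict_iff' measurableSet_Ioi).2 (Filter.Eventually.of_forall hbound)
      _ < ⊤ := (integrableOn_Ioi_rpow_of_lt hs one_pos).setLIntegral_lt_top
  exact ENNReal.add_lt_top.mpr ⟨h1, h2⟩

open Real in
private lemma pow_shuffle (n p : ℕ) (q σ m : ℝ) (hσ : 0 < σ) (hm : 0 < m) :
    σ ^ (-q) / σ ^ n * (σ * m) ^ p = m ^ ((n:ℝ) + q) * (σ * m) ^ ((p:ℝ) - (n:ℝ) - q) := by
  rw [← Real.rpow_natCast σ n, ← Real.rpow_natCast (σ * m) p, Real.mul_rpow hσ.le hm.le,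
    Real.mul_rpow hσ.le hm.le]
  rw [div_eq_mul_inv, ← Real.rpow_neg hσ.le]
  rw [show σ ^ (-q) * σ ^ (-(n:ℝ)) * (σ ^ (p:ℝ) * m ^ (p:ℝ)) =
    (σ ^ (-q) * σ ^ (-(n:ℝ)) * σ ^ (p:ℝ)) * m ^ (p:ℝ) by ring]
  rw [← Real.rpow_add hσ, ← Real.rpow_add hσ]
  rw [show m ^ ((n:ℝ) + q) * (σ ^ ((p:ℝ) - (n:ℝ) - q) * m ^ ((p:ℝ) - (n:ℝ) - q)) =
    (m ^ ((n:ℝ) + q) * m ^ ((p:ℝ) - (n:ℝ) - q)) * σ ^ ((p:ℝ) - (n:ℝ) - q) by ring]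
  rw [← Real.rpow_add hm]
  rw [show -q + -(n:ℝ) + (p:ℝ) = (p:ℝ) - (n:ℝ) - q by ring,
    show (n:ℝ) + q + ((p:ℝ) - (n:ℝ) - q) = (p:ℝ) by ring]
  ring

/-- Two-piece density with location 0, scale `σ`, baseline density `f`,
and parameterisation values `a`, `b`. -/
noncomputable def twoPiece (f : ℝ → ℝ) (σ a b : ℝ) (z : ℝ) : ℝ :=
  if z < 0 then 2 / (σ * (a + b)) * f (z / (σ * b))
  else 2 / (σ * (a + b)) * f (z / (σ * a))

/-- The standard normal density `φ(z) = (2π)^{-1/2} exp(-z²/2)`. -/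
noncomputable def baseline (z : ℝ) : ℝ := (2 * Real.pi) ^ (-(1 / 2 : ℝ)) * Real.exp (-z ^ 2 / 2)

private lemma twoPiece_nonneg (A B σ z : ℝ) (hA : 0 < A) (hB : 0 < B) (hσ : 0 < σ) :
    0 ≤ twoPiece baseline σ A B z := by
  unfold twoPiece baseline
  have h1 : (0:ℝ) ≤ (2 * Real.pi) ^ (-(1/2:ℝ)) := Real.rpow_nonneg (by positivity) _
  split <;> positivity

private lemma twoPiece_le (A B σ z : ℝ) (hA : 0 < A) (hB : 0 < B) (hσ : 0 < σ) :
    twoPiece baseline σ A B z ≤ 2 / (σ * (A + B)) *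
      ((2 * Real.pi) ^ (-(1/2:ℝ)) * Real.exp (-(z ^ 2 / (2 * (σ * max A B) ^ 2)))) := by
  have hm : 0 < max A B := lt_max_of_lt_left hA
  have hcoef : (0:ℝ) ≤ 2 / (σ * (A + B)) := by positivity
  have hC : (0:ℝ) ≤ (2 * Real.pi) ^ (-(1/2:ℝ)) := Real.rpow_nonneg (by positivity) _
  have key : ∀ c : ℝ, 0 < c → c ≤ max A B →
      Real.exp (-(z / (σ * c)) ^ 2 / 2) ≤ Real.exp (-(z ^ 2 / (2 * (σ * max A B) ^ 2))) := by
    intro c hc hcm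
    rw [Real.exp_le_exp]
    rw [div_pow, neg_div, div_div]
    apply neg_le_neg
    rw [mul_comm ((σ*c)^2) 2]
    apply div_le_div_of_nonneg_left (by positivity) (by positivity)
    have : (σ * c) ^ 2 ≤ (σ * max A B) ^ 2 := by
      apply pow_le_pow_left₀ (by positivity)
      exact mul_le_mul_of_nonneg_left hcm hσ.le
    nlinarith
  unfold twoPiece baseline
  split
  · apply mul_le_mul_of_nonneg_left _ hcoef
    apply mul_le_mul_of_nonneg_left _ hC
    exact key B hB (le_max_right A B)
  · apply mul_le_mul_of_nonneg_left _ hcoef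
    apply mul_le_mul_of_nonneg_left _ hC
    exact key A hA (le_max_left A B)

/-- Corollary 2 (normal baseline): in the two-piece linear regression model with the
normal baseline density and prior `π(β,σ,γ) ∝ σ^{-q} π(γ)`, if `y` is not in the column
space of `X`, `n > p + 1 - q`, and condition (iii) holds, then the posterior of
`(β, σ, γ)` is proper. -/
theorem posterior_proper_normal
    (n p : ℕ) (q : ℝ) (hq : 0 ≤ q)
    (X : Matrix (Fin n) (Fin p) ℝ) (hX : X.rank = p)
    (y : Fin n → ℝ)
    (Γ : Set ℝ) (hΓ : MeasurableSet Γ)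
    -- parameterisation functions
    (a b : ℝ → ℝ) (ha_meas : Measurable a) (hb_meas : Measurable b)
    (ha_pos : ∀ γ ∈ Γ, 0 < a γ) (hb_pos : ∀ γ ∈ Γ, 0 < b γ)
    -- proper prior density on Γ
    (πγ : ℝ → ℝ) (hπγ_meas : Measurable πγ) (hπγ_nonneg : ∀ γ, 0 ≤ πγ γ)
    (hπγ_proper : ∫⁻ γ in Γ, ENNReal.ofReal (πγ γ) = 1)
    -- y does not lie in the column space of X
    (hy : ¬ ∃ β : Fin p → ℝ, ∀ j, y j = ∑ i, X j i * β i)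
    -- n > p + 1 - q
    (hnp : (p : ℝ) + 1 - q < n)
    -- condition (iii)
    (hiii : ∫⁻ γ in Γ, ENNReal.ofReal
        (max (a γ) (b γ) ^ ((n : ℝ) + q - 1) / (a γ + b γ) ^ n * πγ γ) < ⊤) :
    -- conclusion: the posterior of (β, σ, γ) is proper
    ∫⁻ γ in Γ, ∫⁻ σ in Set.Ioi (0 : ℝ), ∫⁻ β : Fin p → ℝ,
        ENNReal.ofReal ((∏ j, twoPiece baseline σ (a γ) (b γ) (y j - ∑ i, X j i * β i)) *
          σ ^ (-q) * πγ γ) < ⊤ := by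
  classical
  obtain ⟨t, d, lam, hd, hlam, hQ⟩ := quad_decomp n p X hX y hy
  have hs1 : (p:ℝ) - (n:ℝ) - q < -1 := by linarith
  set g : ℝ → ENNReal := fun τ =>
    ENNReal.ofReal (τ ^ ((p:ℝ) - (n:ℝ) - q) * Real.exp (-(d ^ 2 / 2 / τ ^ 2))) with hgdef
  have hg : Measurable g := by fun_prop
  set I : ENNReal := ∫⁻ τ in Set.Ioi (0:ℝ), g τ with hIdef
  have hI : I < ⊤ := tail_lt_top _ (d ^ 2 / 2) hs1 (by positivity)
  set Cφ : ℝ := (2 * Real.pi) ^ (-(1/2:ℝ)) with hCφ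
  have hCφ0 : (0:ℝ) ≤ Cφ := Real.rpow_nonneg (by positivity) _
  set Kc : ℝ := 2 ^ n * Cφ ^ n * Real.sqrt (2 * Real.pi / lam) ^ p with hKc
  have hKc0 : (0:ℝ) ≤ Kc := by positivity
  -- main per-γ bound
  have main : ∀ γ ∈ Γ, (∫⁻ σ in Set.Ioi (0:ℝ), ∫⁻ β : Fin p → ℝ,
      ENNReal.ofReal ((∏ j, twoPiece baseline σ (a γ) (b γ) (y j - ∑ i, X j i * β i)) *
        σ ^ (-q) * πγ γ))
      ≤ (ENNReal.ofReal Kc * I) *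
        ENNReal.ofReal (max (a γ) (b γ) ^ ((n:ℝ) + q - 1) / (a γ + b γ) ^ n * πγ γ) := by
    intro γ hγ
    set A := a γ with hA
    set B := b γ with hB
    have hApos : 0 < A := ha_pos γ hγ
    have hBpos : 0 < B := hb_pos γ hγ
    set m := max A B with hmdef
    have hm : 0 < m := lt_max_of_lt_left hApos
    have hAB : 0 < A + B := by positivity
    set w := πγ γ with hw
    have hw0 : 0 ≤ w := hπγ_nonneg γ
    set Kγ : ℝ := Kc * (m ^ ((n:ℝ) + q) / (A + B) ^ n * w) with hKγ
    have hKγ0 : 0 ≤ Kγ := by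
      have : (0:ℝ) ≤ m ^ ((n:ℝ) + q) := Real.rpow_nonneg hm.le _
      positivity
    -- step 1 : the inner β-integral bound, for σ > 0
    have step1 : ∀ σ ∈ Set.Ioi (0:ℝ), (∫⁻ β : Fin p → ℝ,
        ENNReal.ofReal ((∏ j, twoPiece baseline σ A B (y j - ∑ i, X j i * β i)) *
          σ ^ (-q) * w)) ≤ ENNReal.ofReal Kγ * g (m * σ) := by
      intro σ hσ
      rw [Set.mem_Ioi] at hσ
      have hσm : 0 < σ * m := by positivity
      set c : ℝ := lam / (2 * (σ * m) ^ 2) with hc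
      have hc0 : 0 < c := by positivity
      set Aσ : ℝ := 2 ^ n / (σ * (A + B)) ^ n * Cφ ^ n *
        Real.exp (-(d ^ 2 / 2 / (σ * m) ^ 2)) * σ ^ (-q) * w with hAσ
      have hσq : (0:ℝ) ≤ σ ^ (-q) := Real.rpow_nonneg hσ.le _
      have hAσ0 : 0 ≤ Aσ := by positivity
      -- pointwise bound
      have hpt : ∀ β : Fin p → ℝ,
          (∏ j, twoPiece baseline σ A B (y j - ∑ i, X j i * β i)) * σ ^ (-q) * w ≤
            Aσ * ∏ i, Real.exp (-(c * (β i - t i) ^ 2)) := by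
        intro β
        set z : Fin n → ℝ := fun j => y j - ∑ i, X j i * β i with hz
        have h1 : ∏ j, twoPiece baseline σ A B (z j) ≤
            ∏ j, (2 / (σ * (A + B)) * (Cφ * Real.exp (-(z j ^ 2 / (2 * (σ * m) ^ 2))))) :=
          Finset.prod_le_prod (fun j _ => twoPiece_nonneg A B σ (z j) hApos hBpos hσ)
            (fun j _ => twoPiece_le A B σ (z j) hApos hBpos hσ)
        have h2 : ∏ j, (2 / (σ * (A + B)) * (Cφ * Real.exp (-(z j ^ 2 / (2 * (σ * m) ^ 2)))))
            = 2 ^ n / (σ * (A + B)) ^ n * Cφ ^ n *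
              Real.exp (-((∑ j, z j ^ 2) / (2 * (σ * m) ^ 2))) := by
          rw [Finset.prod_mul_distrib, Finset.prod_mul_distrib, Finset.prod_const,
            Finset.prod_const, ← Real.exp_sum]
          simp only [Finset.card_univ, Fintype.card_fin, div_pow]
          rw [show (∑ j, -(z j ^ 2 / (2 * (σ * m) ^ 2))) =
            -((∑ j, z j ^ 2) / (2 * (σ * m) ^ 2)) by
              rw [Finset.sum_neg_distrib, ← Finset.sum_div]]
          ring
        have h3 : Real.exp (-((∑ j, z j ^ 2) / (2 * (σ * m) ^ 2))) ≤
            Real.exp (-((d ^ 2 + lam * ∑ i, (β i - t i) ^ 2) / (2 * (σ * m) ^ 2))) := by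
          rw [Real.exp_le_exp]
          apply neg_le_neg
          gcongr
          exact hQ β
        have h4 : Real.exp (-((d ^ 2 + lam * ∑ i, (β i - t i) ^ 2) / (2 * (σ * m) ^ 2)))
            = Real.exp (-(d ^ 2 / 2 / (σ * m) ^ 2)) *
              ∏ i, Real.exp (-(c * (β i - t i) ^ 2)) := by
          rw [← Real.exp_sum, ← Real.exp_add]
          congr 1
          have hsum : ∑ i, -(c * (β i - t i) ^ 2) = -(c * ∑ i, (β i - t i) ^ 2) := by
            rw [Finset.sum_neg_distrib, ← Finset.mul_sum]
          rw [hsum, hc]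
          field_simp
          ring
        calc (∏ j, twoPiece baseline σ A B (z j)) * σ ^ (-q) * w
            ≤ (2 ^ n / (σ * (A + B)) ^ n * Cφ ^ n *
                Real.exp (-((∑ j, z j ^ 2) / (2 * (σ * m) ^ 2)))) * σ ^ (-q) * w := by
              apply mul_le_mul_of_nonneg_right _ hw0
              apply mul_le_mul_of_nonneg_right _ hσq
              rw [← h2]; exact h1
          _ ≤ (2 ^ n / (σ * (A + B)) ^ n * Cφ ^ n *
                (Real.exp (-(d ^ 2 / 2 / (σ * m) ^ 2)) *
                  ∏ i, Real.exp (-(c * (β i - t i) ^ 2)))) * σ ^ (-q) * w := by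
              apply mul_le_mul_of_nonneg_right _ hw0
              apply mul_le_mul_of_nonneg_right _ hσq
              apply mul_le_mul_of_nonneg_left _ (by positivity)
              rw [← h4]; exact h3
          _ = Aσ * ∏ i, Real.exp (-(c * (β i - t i) ^ 2)) := by rw [hAσ]; ring
      -- integrate over β
      calc (∫⁻ β : Fin p → ℝ, ENNReal.ofReal
              ((∏ j, twoPiece baseline σ A B (y j - ∑ i, X j i * β i)) * σ ^ (-q) * w))
          ≤ ∫⁻ β : Fin p → ℝ, ENNReal.ofReal (Aσ * ∏ i, Real.exp (-(c * (β i - t i) ^ 2))) :=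
            lintegral_mono fun β => ENNReal.ofReal_le_ofReal (hpt β)
        _ = ENNReal.ofReal Aσ *
              ∫⁻ β : Fin p → ℝ, ENNReal.ofReal (∏ i, Real.exp (-(c * (β i - t i) ^ 2))) := by
            simp_rw [ENNReal.ofReal_mul hAσ0]
            exact lintegral_const_mul' _ _ ENNReal.ofReal_ne_top
        _ = ENNReal.ofReal Aσ * ENNReal.ofReal (Real.sqrt (Real.pi / c)) ^ p := by
            rw [gaussPi p c hc0 t]
        _ = ENNReal.ofReal (Aσ * Real.sqrt (Real.pi / c) ^ p) := by
            rw [← ENNReal.ofReal_pow (Real.sqrt_nonneg _), ← ENNReal.ofReal_mul hAσ0]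
        _ = ENNReal.ofReal Kγ * g (m * σ) := by
            have hgm : g (m * σ) = ENNReal.ofReal ((σ * m) ^ ((p:ℝ) - (n:ℝ) - q) *
                Real.exp (-(d ^ 2 / 2 / (σ * m) ^ 2))) := by
              rw [hgdef]
              simp only []
              rw [mul_comm m σ]
            rw [hgm, ← ENNReal.ofReal_mul hKγ0]
            congr 1
            -- real computation
            have e1 : Real.sqrt (Real.pi / c) = Real.sqrt (2 * Real.pi / lam) * (σ * m) := by
              have h : Real.pi / c = 2 * Real.pi / lam * (σ * m) ^ 2 := by
                rw [hc]
                field_simp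
              rw [h, Real.sqrt_mul (by positivity), Real.sqrt_sq hσm.le]
            rw [hAσ, e1, hKγ, hKc, mul_pow (Real.sqrt (2 * Real.pi / lam)) (σ * m) p]
            have e2 := pow_shuffle n p q σ m hσ hm
            calc 2 ^ n / (σ * (A + B)) ^ n * Cφ ^ n * Real.exp (-(d ^ 2 / 2 / (σ * m) ^ 2)) *
                  σ ^ (-q) * w * (Real.sqrt (2 * Real.pi / lam) ^ p * (σ * m) ^ p)
                = (2 ^ n * Cφ ^ n * Real.sqrt (2 * Real.pi / lam) ^ p *
                    Real.exp (-(d ^ 2 / 2 / (σ * m) ^ 2)) * w / (A + B) ^ n) *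
                    (σ ^ (-q) / σ ^ n * (σ * m) ^ p) := by
                  rw [mul_pow σ (A+B) n]
                  ring
              _ = (2 ^ n * Cφ ^ n * Real.sqrt (2 * Real.pi / lam) ^ p *
                    Real.exp (-(d ^ 2 / 2 / (σ * m) ^ 2)) * w / (A + B) ^ n) *
                    (m ^ ((n:ℝ) + q) * (σ * m) ^ ((p:ℝ) - (n:ℝ) - q)) := by rw [e2]
              _ = 2 ^ n * Cφ ^ n * Real.sqrt (2 * Real.pi / lam) ^ p *
                    (m ^ ((n:ℝ) + q) / (A + B) ^ n * w) *
                    ((σ * m) ^ ((p:ℝ) - (n:ℝ) - q) *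
                      Real.exp (-(d ^ 2 / 2 / (σ * m) ^ 2))) := by ring
    -- step 2 : integrate over σ
    calc (∫⁻ σ in Set.Ioi (0:ℝ), ∫⁻ β : Fin p → ℝ,
            ENNReal.ofReal ((∏ j, twoPiece baseline σ A B (y j - ∑ i, X j i * β i)) *
              σ ^ (-q) * w))
        ≤ ∫⁻ σ in Set.Ioi (0:ℝ), ENNReal.ofReal Kγ * g (m * σ) :=
          lintegral_mono_ae ((ae_restrict_iff' measurableSet_Ioi).2
            (Filter.Eventually.of_forall step1))
      _ = ENNReal.ofReal Kγ * ∫⁻ σ in Set.Ioi (0:ℝ), g (m * σ) :=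
          lintegral_const_mul' _ _ ENNReal.ofReal_ne_top
      _ = ENNReal.ofReal Kγ * (ENNReal.ofReal m⁻¹ * I) := by
          rw [lintegral_Ioi_scale m hm g hg, hIdef]
      _ = (ENNReal.ofReal Kc * I) *
            ENNReal.ofReal (m ^ ((n:ℝ) + q - 1) / (A + B) ^ n * w) := by
          rw [← mul_assoc, ← ENNReal.ofReal_mul hKγ0]
          have e3 : Kγ * m⁻¹ = Kc * (m ^ ((n:ℝ) + q - 1) / (A + B) ^ n * w) := by
            rw [hKγ, show (n:ℝ) + q - 1 = ((n:ℝ) + q) - 1 by ring,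
              Real.rpow_sub hm, Real.rpow_one, div_eq_mul_inv (m ^ ((n:ℝ) + q)) m]
            ring
          rw [e3, ENNReal.ofReal_mul hKc0]
          ring
  -- conclude
  calc ∫⁻ γ in Γ, ∫⁻ σ in Set.Ioi (0:ℝ), ∫⁻ β : Fin p → ℝ,
          ENNReal.ofReal ((∏ j, twoPiece baseline σ (a γ) (b γ) (y j - ∑ i, X j i * β i)) *
            σ ^ (-q) * πγ γ)
      ≤ ∫⁻ γ in Γ, (ENNReal.ofReal Kc * I) *
          ENNReal.ofReal (max (a γ) (b γ) ^ ((n:ℝ) + q - 1) / (a γ + b γ) ^ n * πγ γ) :=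
        lintegral_mono_ae ((ae_restrict_iff' hΓ).2 (Filter.Eventually.of_forall main))
    _ = (ENNReal.ofReal Kc * I) * ∫⁻ γ in Γ, ENNReal.ofReal
          (max (a γ) (b γ) ^ ((n:ℝ) + q - 1) / (a γ + b γ) ^ n * πγ γ) :=
        lintegral_const_mul' _ _ (by
          exact ENNReal.mul_ne_top ENNReal.ofReal_ne_top hI.ne)
    _ < ⊤ := ENNReal.mul_lt_top (ENNReal.mul_lt_top ENNReal.ofReal_lt_top hI) hiii
end

section
/- Theorem 2 (censored observations): Consider the accelerated failure time model y_j = x_jᵀβ + ε_j, j = 1,…,n, with ε_j i.i.d. two-piece distributed with location 0, scale σ, baseline density f_δ, and parameterisation functions a(γ), b(γ), under the prior π(β,σ,δ,γ) ∝ σ^{−q} π(δ) π(γ). Let {1,…,n} = O ∪ C be a partition into n_o observed indices (with observed values y_j, j ∈ O) and n_c = n − n_o censored indices (with Borel censoring sets A_j ⊆ ℝ, j ∈ C), and define the censored-data likelihood L(β,σ,δ,γ) = ∏_{j∈O} g(y_j − x_jᵀβ | σ, a(γ), b(γ); f_δ) · ∏_{j∈C} ∫_{A_j} g(t − x_jᵀβ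 | σ, a(γ), b(γ); f_δ) dt. If the posterior based only on the uncensored observations is proper, i.e. ∫_Γ ∫_Δ ∫_0^∞ ∫_{ℝ^p} ∏_{j∈O} g(y_j − x_jᵀβ | σ, a(γ), b(γ); f_δ) · σ^{−q} π(δ) π(γ) dβ dσ dδ dγ < ∞, then the censored-data posterior is proper: ∫_Γ ∫_Δ ∫_0^∞ ∫_{ℝ^p} L(β,σ,δ,γ) · σ^{−q} π(δ) π(γ) dβ dσ dδ dγ < ∞. -/
open MeasureTheory

lemma twoPiece_nonneg_s8 {f : ℝ → ℝ} (hf : ∀ z, 0 < f z) {σ a b : ℝ}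
    (hσ : 0 < σ) (ha : 0 < a) (hb : 0 < b) (z : ℝ) :
    0 ≤ twoPiece f σ a b z := by
  have hk : 0 < 2 / (σ * (a + b)) := by positivity
  unfold twoPiece
  split <;> exact le_of_lt (mul_pos hk (hf _))

lemma twoPiece_integral {f : ℝ → ℝ} (hm : Measurable f)
    (hsymm : ∀ z, f (-z) = f z) (hdens : ∫ z, f z = 1)
    {σ a b : ℝ} (hσ : 0 < σ) (ha : 0 < a) (hb : 0 < b) :
    Integrable (twoPiece f σ a b) ∧ ∫ z, twoPiece f σ a b z = 1 := by
  have hfi : Integrable f := by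
    by_contra h
    rw [integral_undef h] at hdens
    norm_num at hdens
  have hσb : (0:ℝ) < σ * b := by positivity
  have hσa : (0:ℝ) < σ * a := by positivity
  set k : ℝ := 2 / (σ * (a + b)) with hk
  set g1 : ℝ → ℝ := (Set.Iio (0:ℝ)).indicator f with hg1
  set g2 : ℝ → ℝ := (Set.Ici (0:ℝ)).indicator f with hg2
  have key : ∀ z, twoPiece f σ a b z = k * g1 (z / (σ * b)) + k * g2 (z / (σ * a)) := by
    intro z
    unfold twoPiece
    by_cases hz : z < 0
    · have h1 : z / (σ * b) < 0 := div_neg_of_neg_of_pos hz hσb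
      have h2 : z / (σ * a) < 0 := div_neg_of_neg_of_pos hz hσa
      simp [hz, hg1, hg2, Set.indicator, h1, not_le.mpr h2, hk]
    · push_neg at hz
      have h1 : ¬ (z / (σ * b) < 0) := not_lt.mpr (div_nonneg hz hσb.le)
      have h2 : (0:ℝ) ≤ z / (σ * a) := div_nonneg hz hσa.le
      simp [hz, not_lt.mpr hz, hg1, hg2, Set.indicator, h1, h2, hk]
  have hg1i : Integrable g1 := hfi.indicator measurableSet_Iio
  have hg2i : Integrable g2 := hfi.indicator measurableSet_Ici
  have hi1 : Integrable (fun z => k * g1 (z / (σ * b))) :=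
    (hg1i.comp_div hσb.ne').const_mul k
  have hi2 : Integrable (fun z => k * g2 (z / (σ * a))) :=
    (hg2i.comp_div hσa.ne').const_mul k
  have hint : Integrable (twoPiece f σ a b) := by
    refine (hi1.add hi2).congr (Filter.Eventually.of_forall fun z => ?_)
    simp [key z]
  refine ⟨hint, ?_⟩
  -- halves of the integral of f
  have hIic : ∫ z in Set.Iic (0:ℝ), f z = ∫ z in Set.Ioi (0:ℝ), f z := by
    calc ∫ z in Set.Iic (0:ℝ), f z = ∫ z in Set.Iic (0:ℝ), f (-z) := by
          simp [hsymm]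
      _ = ∫ z in Set.Ioi (-(0:ℝ)), f z := integral_comp_neg_Iic 0 f
      _ = ∫ z in Set.Ioi (0:ℝ), f z := by norm_num
  have hsplit : (∫ z in Set.Iic (0:ℝ), f z) + ∫ z in Set.Ioi (0:ℝ), f z = 1 := by
    rw [intervalIntegral.integral_Iic_add_Ioi hfi.integrableOn hfi.integrableOn, hdens]
  have hIoi : ∫ z in Set.Ioi (0:ℝ), f z = 1 / 2 := by linarith [hsplit, hIic]
  have hIio : ∫ z in Set.Iio (0:ℝ), f z = 1 / 2 := by
    rw [← integral_Iic_eq_integral_Iio, hIic, hIoi]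
  have hIci : ∫ z in Set.Ici (0:ℝ), f z = 1 / 2 := by
    rw [integral_Ici_eq_integral_Ioi, hIoi]
  have e1 : ∫ z, g1 (z / (σ * b)) = (σ * b) * (1 / 2) := by
    rw [MeasureTheory.Measure.integral_comp_div g1 (σ * b)]
    rw [abs_of_pos hσb, smul_eq_mul, hg1, integral_indicator measurableSet_Iio, hIio]
  have e2 : ∫ z, g2 (z / (σ * a)) = (σ * a) * (1 / 2) := by
    rw [MeasureTheory.Measure.integral_comp_div g2 (σ * a)]
    rw [abs_of_pos hσa, smul_eq_mul, hg2, integral_indicator measurableSet_Ici, hIci]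
  calc ∫ z, twoPiece f σ a b z
      = ∫ z, (k * g1 (z / (σ * b)) + k * g2 (z / (σ * a))) := by
        exact integral_congr_ae (Filter.Eventually.of_forall key)
    _ = k * (∫ z, g1 (z / (σ * b))) + k * (∫ z, g2 (z / (σ * a))) := by
        rw [integral_add hi1 hi2, MeasureTheory.integral_const_mul, MeasureTheory.integral_const_mul]
    _ = 1 := by
        rw [e1, e2, hk]
        have h1 : σ ≠ 0 := hσ.ne'
        have h2 : a + b ≠ 0 := by positivity
        field_simp
        ring

lemma twoPiece_setIntegral_le_one {f : ℝ → ℝ} (hm : Measurable f)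
    (hpos : ∀ z, 0 < f z) (hsymm : ∀ z, f (-z) = f z) (hdens : ∫ z, f z = 1)
    {σ a b : ℝ} (hσ : 0 < σ) (ha : 0 < a) (hb : 0 < b) (c : ℝ) {A : Set ℝ} :
    ∫ t in A, twoPiece f σ a b (t - c) ≤ 1 := by
  obtain ⟨hint, hval⟩ := twoPiece_integral hm hsymm hdens hσ ha hb
  have hint' : Integrable (fun t => twoPiece f σ a b (t - c)) := hint.comp_sub_right c
  have hval' : ∫ t, twoPiece f σ a b (t - c) = 1 := by
    rw [integral_sub_right_eq_self (twoPiece f σ a b) c, hval]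
  calc ∫ t in A, twoPiece f σ a b (t - c)
      ≤ ∫ t, twoPiece f σ a b (t - c) :=
        setIntegral_le_integral hint'
          (Filter.Eventually.of_forall fun t => twoPiece_nonneg_s8 hpos hσ ha hb _)
    _ = 1 := hval'

/-- Theorem 2 (censored observations): in the accelerated failure time model with
two-piece errors, if the posterior based only on the uncensored observations (indices in `O`)
is proper, then the censored-data posterior (where each censored index `j ∉ O` contributes the
factor `∫_{A_j} g(t - x_jᵀβ) dt`) is proper. -/
theorem censored_posterior_proper_of_uncensored_posterior_proper
    (n p : ℕ) (q : ℝ) (hq : 0 ≤ q)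
    (X : Matrix (Fin n) (Fin p) ℝ)
    -- observed indices and observed values
    (O : Finset (Fin n)) (y : Fin n → ℝ)
    -- censoring sets for the censored indices
    (A : Fin n → Set ℝ) (hA : ∀ j, MeasurableSet (A j))
    (Δ Γ : Set ℝ) (hΔ : MeasurableSet Δ) (hΓ : MeasurableSet Γ)
    -- baseline densities f_δ : symmetric, strictly positive probability densities
    (f : ℝ → ℝ → ℝ) (hf_meas : Measurable (Function.uncurry f))
    (hf_pos : ∀ δ ∈ Δ, ∀ z, 0 < f δ z)
    (hf_symm : ∀ δ ∈ Δ, ∀ z, f δ (-z) = f δ z)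
    (hf_dens : ∀ δ ∈ Δ, ∫ z, f δ z = 1)
    -- parameterisation functions
    (a b : ℝ → ℝ) (ha_meas : Measurable a) (hb_meas : Measurable b)
    (ha_pos : ∀ γ ∈ Γ, 0 < a γ) (hb_pos : ∀ γ ∈ Γ, 0 < b γ)
    -- proper prior densities on Δ and Γ
    (πδ πγ : ℝ → ℝ) (hπδ_meas : Measurable πδ) (hπγ_meas : Measurable πγ)
    (hπδ_nonneg : ∀ δ, 0 ≤ πδ δ) (hπγ_nonneg : ∀ γ, 0 ≤ πγ γ)
    (hπδ_proper : ∫⁻ δ in Δ, ENNReal.ofReal (πδ δ) = 1)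
    (hπγ_proper : ∫⁻ γ in Γ, ENNReal.ofReal (πγ γ) = 1)
    -- hypothesis: the posterior based only on the uncensored observations is proper
    (ho : ∫⁻ γ in Γ, ∫⁻ δ in Δ, ∫⁻ σ in Set.Ioi (0 : ℝ), ∫⁻ β : Fin p → ℝ,
        ENNReal.ofReal ((∏ j ∈ O, twoPiece (f δ) σ (a γ) (b γ) (y j - ∑ i, X j i * β i)) *
          σ ^ (-q) * πδ δ * πγ γ) < ⊤) :
    -- conclusion: the censored-data posterior is proper
    ∫⁻ γ in Γ, ∫⁻ δ in Δ, ∫⁻ σ in Set.Ioi (0 : ℝ), ∫⁻ β : Fin p → ℝ,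
        ENNReal.ofReal ((∏ j ∈ O, twoPiece (f δ) σ (a γ) (b γ) (y j - ∑ i, X j i * β i)) *
          (∏ j ∈ Oᶜ, ∫ t in A j, twoPiece (f δ) σ (a γ) (b γ) (t - ∑ i, X j i * β i)) *
          σ ^ (-q) * πδ δ * πγ γ) < ⊤ := by
  refine lt_of_le_of_lt ?_ ho
  refine setLIntegral_mono' hΓ fun γ hγ => ?_
  refine setLIntegral_mono' hΔ fun δ hδ => ?_
  refine setLIntegral_mono' measurableSet_Ioi fun σ hσ => ?_
  refine lintegral_mono fun β => ?_
  apply ENNReal.ofReal_le_ofReal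
  have hσ0 : (0:ℝ) < σ := hσ
  have hfm : Measurable (f δ) := hf_meas.comp measurable_prodMk_left
  have hP : 0 ≤ ∏ j ∈ O, twoPiece (f δ) σ (a γ) (b γ) (y j - ∑ i, X j i * β i) :=
    Finset.prod_nonneg fun j _ =>
      twoPiece_nonneg_s8 (hf_pos δ hδ) hσ0 (ha_pos γ hγ) (hb_pos γ hγ) _
  have hQ1 : (∏ j ∈ Oᶜ, ∫ t in A j, twoPiece (f δ) σ (a γ) (b γ) (t - ∑ i, X j i * β i)) ≤ 1 :=
    Finset.prod_le_one
      (fun j _ => setIntegral_nonneg (hA j) fun t _ =>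
        twoPiece_nonneg_s8 (hf_pos δ hδ) hσ0 (ha_pos γ hγ) (hb_pos γ hγ) _)
      (fun j _ => twoPiece_setIntegral_le_one hfm (hf_pos δ hδ) (hf_symm δ hδ)
        (hf_dens δ hδ) hσ0 (ha_pos γ hγ) (hb_pos γ hγ) _)
  have hrest : 0 ≤ σ ^ (-q) * πδ δ * πγ γ := by
    have : (0:ℝ) ≤ σ ^ (-q) := Real.rpow_nonneg hσ0.le _
    exact mul_nonneg (mul_nonneg this (hπδ_nonneg δ)) (hπγ_nonneg γ)
  calc (∏ j ∈ O, twoPiece (f δ) σ (a γ) (b γ) (y j - ∑ i, X j i * β i)) *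
          (∏ j ∈ Oᶜ, ∫ t in A j, twoPiece (f δ) σ (a γ) (b γ) (t - ∑ i, X j i * β i)) *
          σ ^ (-q) * πδ δ * πγ γ
      ≤ (∏ j ∈ O, twoPiece (f δ) σ (a γ) (b γ) (y j - ∑ i, X j i * β i)) * 1 *
          σ ^ (-q) * πδ δ * πγ γ := by
        have h1 : (∏ j ∈ O, twoPiece (f δ) σ (a γ) (b γ) (y j - ∑ i, X j i * β i)) *
            (∏ j ∈ Oᶜ, ∫ t in A j, twoPiece (f δ) σ (a γ) (b γ) (t - ∑ i, X j i * β i)) ≤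
            (∏ j ∈ O, twoPiece (f δ) σ (a γ) (b γ) (y j - ∑ i, X j i * β i)) * 1 :=
          mul_le_mul_of_nonneg_left hQ1 hP
        have h2 : (0:ℝ) ≤ πδ δ := hπδ_nonneg δ
        have h3 : (0:ℝ) ≤ πγ γ := hπγ_nonneg γ
        have h4 : (0:ℝ) ≤ σ ^ (-q) := Real.rpow_nonneg hσ0.le _
        exact mul_le_mul_of_nonneg_right
          (mul_le_mul_of_nonneg_right (mul_le_mul_of_nonneg_right h1 h4) h2) h3
    _ = (∏ j ∈ O, twoPiece (f δ) σ (a γ) (b γ) (y j - ∑ i, X j i * β i)) *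
          σ ^ (-q) * πδ δ * πγ γ := by ring
end

section
/- The skewness-prior elicitation of Rubio and Steel applied to the Mudholkar–Hutson parameterisation with a Beta(1/2,1/2) prior yields the Jeffreys prior of γ: with a(γ) = 1 − γ and b(γ) = 1 + γ for γ ∈ (−1,1), and a₀ = b₀ = 1/2, the elicited prior density expression |a′(γ)b(γ) − a(γ)b′(γ)| · (a(γ)+b(γ))^{−(a₀+b₀)} · a(γ)^{a₀−1} · b(γ)^{b₀−1} equals (1 − γ²)^{−1/2} for every γ ∈ (−1,1). -/
/-- The skewness-prior elicitation of Rubio and Steel applied to the Mudholkar–Hutson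
parameterisation `a(γ) = 1 - γ`, `b(γ) = 1 + γ` on `(-1, 1)` with a `Beta(1/2, 1/2)` prior
(`a₀ = b₀ = 1/2`) yields the Jeffreys prior `(1 - γ²)^{-1/2}` of `γ`. -/
theorem mudholkar_hutson_beta_half_gives_jeffreys
    (a b : ℝ → ℝ) (ha : ∀ γ, a γ = 1 - γ) (hb : ∀ γ, b γ = 1 + γ)
    (a₀ b₀ : ℝ) (ha₀ : a₀ = 1 / 2) (hb₀ : b₀ = 1 / 2) :
    ∀ γ ∈ Set.Ioo (-1 : ℝ) 1,
      |deriv a γ * b γ - a γ * deriv b γ| * (a γ + b γ) ^ (-(a₀ + b₀)) *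
          a γ ^ (a₀ - 1) * b γ ^ (b₀ - 1) =
        (1 - γ ^ 2) ^ (-(1 / 2) : ℝ) := by
  intro γ hγ
  obtain ⟨h1, h2⟩ := hγ
  have hda : deriv a γ = -1 := by
    have h : a = fun x => 1 - x := funext ha
    rw [h]
    simpa using (((hasDerivAt_id γ).const_sub 1)).deriv
  have hdb : deriv b γ = 1 := by
    have h : b = fun x => 1 + x := funext hb
    rw [h]
    simpa using (((hasDerivAt_id γ).const_add 1)).deriv
  have hap : (0:ℝ) < 1 - γ := by linarith
  have hbp : (0:ℝ) < 1 + γ := by linarith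
  rw [hda, hdb, ha, hb, ha₀, hb₀]
  have habs : |(-1) * (1 + γ) - (1 - γ) * 1| = 2 := by
    rw [abs_of_nonpos (by linarith)]; ring
  rw [habs]
  have h12 : (1 - γ) + (1 + γ) = 2 := by ring
  rw [h12]
  have hmul : (1 - γ) ^ (1/2 - 1 : ℝ) * (1 + γ) ^ (1/2 - 1 : ℝ)
      = ((1 - γ) * (1 + γ)) ^ (-(1/2) : ℝ) := by
    rw [← Real.mul_rpow hap.le hbp.le]; norm_num
  have h2pow : (2:ℝ) ^ (-(1/2 + 1/2) : ℝ) = 1/2 := by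
    norm_num [Real.rpow_neg_one]
  calc 2 * (2:ℝ) ^ (-(1/2 + 1/2) : ℝ) * (1 - γ) ^ (1/2 - 1 : ℝ) * (1 + γ) ^ (1/2 - 1 : ℝ)
      = (1 - γ) ^ (1/2 - 1 : ℝ) * (1 + γ) ^ (1/2 - 1 : ℝ) := by rw [h2pow]; ring
    _ = ((1 - γ) * (1 + γ)) ^ (-(1/2) : ℝ) := hmul
    _ = (1 - γ ^ 2) ^ (-(1/2) : ℝ) := by ring_nf
end
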